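/- Fix $\lambda > 0$ and an integer $l$ with $1 \leq l < \lambda$. Define $C_{k,l} = \sum_{s=0}^{k-l}\binom{k}{s}\left(\frac{\lambda-l}{\lambda}\right)^s A_{k-s,l}$, where $A_{k,l} \sim C_l\, k^{-l/2}\left(\frac{l}{l+1}\right)^k$ as $k\to\infty$ for some constant $C_l > 0$. Then $C_{k,l} \sim C_l\left(1 + \frac{(\lambda-l)(l+1)}{\lambda l}\right)^{l/2}\, k^{-l/2}\left(\frac{\lambda-l}{\lambda} + \frac{l}{l+1}\right)^k$ as $k \to \infty$. -/

import Mathlib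

open Finset Filter

open Topology

set_option maxHeartbeats 1000000


/-- If `f` has positive derivative at `1` and `f 1 = 0`, then `f` is positive
somewhere to the right of `1`. -/
private lemma exists_pos_right {f : ℝ → ℝ} {c : ℝ} (hf : HasDerivAt f c 1)
    (h0 : f 1 = 0) (hc : 0 < c) : ∃ t : ℝ, 1 < t ∧ 0 < f t := by
  rw [hasDerivAt_iff_tendsto_slope] at hf
  have h1 : ∀ᶠ t in 𝓝[≠] (1:ℝ), 0 < slope f 1 t := hf.eventually (eventually_gt_nhds hc)
  have h2 : 𝓝[>] (1:ℝ) ≤ 𝓝[≠] (1:ℝ) := nhdsWithin_mono _ fun x hx => ne_of_gt hx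
  have h3 : ∀ᶠ t in 𝓝[>] (1:ℝ), 1 < t := eventually_mem_nhdsWithin
  obtain ⟨t, hslope, ht⟩ := ((h1.filter_mono h2).and h3).exists
  refine ⟨t, ht, ?_⟩
  rw [slope_def_field, h0, sub_zero] at hslope
  have h4 : 0 < (f t / (t - 1)) * (t - 1) := mul_pos hslope (by linarith)
  rwa [div_mul_cancel₀ _ (by linarith : t - (1:ℝ) ≠ 0)] at h4

private lemma exists_pos_left {f : ℝ → ℝ} {c : ℝ} (hf : HasDerivAt f c 1)
    (h0 : f 1 = 0) (hc : c < 0) : ∃ t : ℝ, 0 < t ∧ t < 1 ∧ 0 < f t := by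
  rw [hasDerivAt_iff_tendsto_slope] at hf
  have h1 : ∀ᶠ t in 𝓝[≠] (1:ℝ), slope f 1 t < 0 := hf.eventually (eventually_lt_nhds hc)
  have h2 : 𝓝[<] (1:ℝ) ≤ 𝓝[≠] (1:ℝ) := nhdsWithin_mono _ fun x hx => ne_of_lt hx
  have h3 : Set.Ioo (0:ℝ) 1 ∈ 𝓝[<] (1:ℝ) :=
    Ioo_mem_nhdsLT_of_mem ⟨by norm_num, le_refl 1⟩
  obtain ⟨t, hslope, ht0, ht1⟩ := ((h1.filter_mono h2).and h3).exists
  refine ⟨t, ht0, ht1, ?_⟩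
  rw [slope_def_field, h0, sub_zero] at hslope
  have h4 : 0 < (f t / (t - 1)) * (t - 1) := mul_pos_of_neg_of_neg hslope (by linarith)
  rwa [div_mul_cancel₀ _ (by linarith : t - (1:ℝ) ≠ 0)] at h4

/-- Existence of a Chernoff parameter for the upper tail. -/
private lemma exists_t_upper {p q a : ℝ} (hp : 0 < p) (hq : 0 < q)
    (ha : p / (p + q) < a) : ∃ t : ℝ, 1 < t ∧ p * t + q < (p + q) * t ^ a := by
  have hr : 0 < p + q := by linarith
  have hd : HasDerivAt (fun t : ℝ => (p + q) * t ^ a - (p * t + q))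
      ((p + q) * a - p) 1 := by
    have h1 : HasDerivAt (fun t : ℝ => t ^ a) (a * (1:ℝ) ^ (a - 1)) 1 :=
      Real.hasDerivAt_rpow_const (Or.inl one_ne_zero)
    have h2 : HasDerivAt (fun t : ℝ => (p + q) * t ^ a) ((p + q) * a) 1 := by
      simpa [Real.one_rpow] using h1.const_mul (p + q)
    have h3 : HasDerivAt (fun t : ℝ => p * t + q) p 1 := by
      simpa using ((hasDerivAt_id (1:ℝ)).const_mul p).add_const q
    exact h2.sub h3
  have hc : 0 < (p + q) * a - p := by
    rw [div_lt_iff₀ hr] at ha; nlinarith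
  obtain ⟨t, ht1, htf⟩ := exists_pos_right hd (by simp [Real.one_rpow]) hc
  exact ⟨t, ht1, by linarith⟩

/-- Existence of a Chernoff parameter for the lower tail. -/
private lemma exists_t_lower {p q a : ℝ} (hp : 0 < p) (hq : 0 < q)
    (ha : a < p / (p + q)) : ∃ t : ℝ, 0 < t ∧ t < 1 ∧ p * t + q < (p + q) * t ^ a := by
  have hr : 0 < p + q := by linarith
  have hd : HasDerivAt (fun t : ℝ => (p + q) * t ^ a - (p * t + q))
      ((p + q) * a - p) 1 := by
    have h1 : HasDerivAt (fun t : ℝ => t ^ a) (a * (1:ℝ) ^ (a - 1)) 1 :=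
      Real.hasDerivAt_rpow_const (Or.inl one_ne_zero)
    have h2 : HasDerivAt (fun t : ℝ => (p + q) * t ^ a) ((p + q) * a) 1 := by
      simpa [Real.one_rpow] using h1.const_mul (p + q)
    have h3 : HasDerivAt (fun t : ℝ => p * t + q) p 1 := by
      simpa using ((hasDerivAt_id (1:ℝ)).const_mul p).add_const q
    exact h2.sub h3
  have hc : (p + q) * a - p < 0 := by
    rw [lt_div_iff₀ hr] at ha; nlinarith
  obtain ⟨t, ht0, ht1, htf⟩ := exists_pos_left hd (by simp [Real.one_rpow]) hc
  exact ⟨t, ht0, ht1, by linarith⟩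

/-- weight of binomial convolution -/
private noncomputable def wfun (p q : ℝ) (k s : ℕ) : ℝ :=
  (k.choose s : ℝ) * p ^ s * q ^ (k - s) / (p + q) ^ k

private lemma sum_w_eq_one {p q : ℝ} (hp : 0 < p) (hq : 0 < q) (k : ℕ) :
    ∑ s ∈ range (k + 1), wfun p q k s = 1 := by
  have hr : (0:ℝ) < p + q := by linarith
  unfold wfun
  rw [← Finset.sum_div, div_eq_one_iff_eq (by positivity), add_pow p q k]
  exact Finset.sum_congr rfl fun s _ => by ring

private lemma chernoff_sum {p q t c : ℝ} (hp : 0 ≤ p) (hq : 0 ≤ q) (ht : 0 ≤ t)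
    (hc : 0 < c) (k : ℕ) (P : ℕ → Prop) [DecidablePred P]
    (hP : ∀ s, s ≤ k → P s → c ≤ t ^ s) :
    ∑ s ∈ (range (k + 1)).filter P, (k.choose s : ℝ) * p ^ s * q ^ (k - s) ≤
      (p * t + q) ^ k / c := by
  rw [le_div_iff₀ hc]
  calc (∑ s ∈ (range (k + 1)).filter P, (k.choose s : ℝ) * p ^ s * q ^ (k - s)) * c
      = ∑ s ∈ (range (k + 1)).filter P,
          ((k.choose s : ℝ) * p ^ s * q ^ (k - s)) * c := by rw [Finset.sum_mul]
    _ ≤ ∑ s ∈ (range (k + 1)).filter P,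
          (k.choose s : ℝ) * (p * t) ^ s * q ^ (k - s) := by
        apply Finset.sum_le_sum
        intro s hs
        rw [Finset.mem_filter, Finset.mem_range] at hs
        have h1 : c ≤ t ^ s := hP s (by omega) hs.2
        have h2 : (0:ℝ) ≤ (k.choose s : ℝ) * p ^ s * q ^ (k - s) := by positivity
        calc (k.choose s : ℝ) * p ^ s * q ^ (k - s) * c
            ≤ (k.choose s : ℝ) * p ^ s * q ^ (k - s) * t ^ s := by
              exact mul_le_mul_of_nonneg_left h1 h2
          _ = (k.choose s : ℝ) * (p * t) ^ s * q ^ (k - s) := by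
              rw [mul_pow]; ring
    _ ≤ ∑ s ∈ range (k + 1), (k.choose s : ℝ) * (p * t) ^ s * q ^ (k - s) := by
        apply Finset.sum_le_sum_of_subset_of_nonneg (Finset.filter_subset _ _)
        intro s _ _; positivity
    _ = (p * t + q) ^ k := by
        rw [add_pow (p * t) q k]
        exact Finset.sum_congr rfl fun s _ => by ring

/-- Upper tail bound for the normalized binomial weights. -/
private lemma tail_upper {p q a : ℝ} (hp : 0 < p) (hq : 0 < q)
    (ha : p / (p + q) < a) :
    ∃ ρ : ℝ, 0 < ρ ∧ ρ < 1 ∧ ∀ (k : ℕ) (P : ℕ → Prop) [DecidablePred P],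
      (∀ s, s ≤ k → P s → a * k ≤ s) →
      ∑ s ∈ (range (k + 1)).filter P, wfun p q k s ≤ ρ ^ k := by
  have hr : (0:ℝ) < p + q := by linarith
  obtain ⟨t, ht1, ht⟩ := exists_t_upper hp hq ha
  have ht0 : (0:ℝ) < t := by linarith
  have hta : (0:ℝ) < t ^ a := Real.rpow_pos_of_pos ht0 a
  refine ⟨(p * t + q) / (t ^ a * (p + q)), by positivity, ?_, ?_⟩
  · rw [div_lt_one (by positivity)]; nlinarith
  · intro k P _ hPk
    have hc : (0:ℝ) < (t ^ a) ^ k := by positivity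
    have key := chernoff_sum hp.le hq.le ht0.le hc k P ?_
    · unfold wfun
      rw [← Finset.sum_div, div_le_iff₀ (by positivity), div_pow, div_mul_eq_mul_div,
        le_div_iff₀ (by positivity), mul_pow]
      calc (∑ s ∈ (range (k+1)).filter P, (k.choose s : ℝ) * p ^ s * q ^ (k - s)) *
            ((t ^ a) ^ k * (p + q) ^ k)
          = ((∑ s ∈ (range (k+1)).filter P, (k.choose s : ℝ) * p ^ s * q ^ (k - s)) *
            (t ^ a) ^ k) * (p + q) ^ k := by ring
        _ ≤ (p * t + q) ^ k * (p + q) ^ k := by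
            apply mul_le_mul_of_nonneg_right _ (by positivity)
            rw [← le_div_iff₀ hc]; exact key
    · intro s hsk hPs
      have h1 : a * k ≤ s := hPk s hsk hPs
      have h2 : (t ^ a) ^ k = t ^ (a * k) := by
        rw [← Real.rpow_natCast (t ^ a) k, ← Real.rpow_mul ht0.le]
      rw [h2, ← Real.rpow_natCast t s]
      exact Real.rpow_le_rpow_of_exponent_le ht1.le h1

/-- Lower tail bound for the normalized binomial weights. -/
private lemma tail_lower {p q a : ℝ} (hp : 0 < p) (hq : 0 < q)
    (ha : a < p / (p + q)) :
    ∃ ρ : ℝ, 0 < ρ ∧ ρ < 1 ∧ ∀ (k : ℕ) (P : ℕ → Prop) [DecidablePred P],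
      (∀ s, s ≤ k → P s → (s : ℝ) ≤ a * k) →
      ∑ s ∈ (range (k + 1)).filter P, wfun p q k s ≤ ρ ^ k := by
  have hr : (0:ℝ) < p + q := by linarith
  obtain ⟨t, ht0, ht1, ht⟩ := exists_t_lower hp hq ha
  have hta : (0:ℝ) < t ^ a := Real.rpow_pos_of_pos ht0 a
  refine ⟨(p * t + q) / (t ^ a * (p + q)), by positivity, ?_, ?_⟩
  · rw [div_lt_one (by positivity)]; nlinarith
  · intro k P _ hPk
    have hc : (0:ℝ) < (t ^ a) ^ k := by positivity
    have key := chernoff_sum hp.le hq.le ht0.le hc k P ?_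
    · unfold wfun
      rw [← Finset.sum_div, div_le_iff₀ (by positivity), div_pow, div_mul_eq_mul_div,
        le_div_iff₀ (by positivity), mul_pow]
      calc (∑ s ∈ (range (k+1)).filter P, (k.choose s : ℝ) * p ^ s * q ^ (k - s)) *
            ((t ^ a) ^ k * (p + q) ^ k)
          = ((∑ s ∈ (range (k+1)).filter P, (k.choose s : ℝ) * p ^ s * q ^ (k - s)) *
            (t ^ a) ^ k) * (p + q) ^ k := by ring
        _ ≤ (p * t + q) ^ k * (p + q) ^ k := by
            apply mul_le_mul_of_nonneg_right _ (by positivity)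
            rw [← le_div_iff₀ hc]; exact key
    · intro s hsk hPs
      have h1 : (s:ℝ) ≤ a * k := hPk s hsk hPs
      have h2 : (t ^ a) ^ k = t ^ (a * k) := by
        rw [← Real.rpow_natCast (t ^ a) k, ← Real.rpow_mul ht0.le]
      rw [h2, ← Real.rpow_natCast t s]
      exact Real.rpow_le_rpow_of_exponent_ge ht0 ht1.le h1
private noncomputable def gfun (p q : ℝ) (l k s : ℕ) : ℝ :=
  (q * k / ((p + q) * ((k - s : ℕ) : ℝ))) ^ ((l : ℝ) / 2)

private noncomputable def ufun (Cl q : ℝ) (l : ℕ) (A : ℕ → ℝ) (m : ℕ) : ℝ :=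
  A m / (Cl * (m : ℝ) ^ (-(l : ℝ) / 2) * q ^ m)

private lemma ratio_eq {p q Cl : ℝ} (hp : 0 < p) (hq : 0 < q) (hCl : 0 < Cl)
    (l k : ℕ) (hl : 1 ≤ l) (hlk : l ≤ k) (A : ℕ → ℝ) :
    (∑ s ∈ range (k - l + 1), (k.choose s : ℝ) * p ^ s * A (k - s)) /
      (Cl * ((p + q) / q) ^ ((l : ℝ) / 2) * (k : ℝ) ^ (-(l : ℝ) / 2) * (p + q) ^ k)
    = ∑ s ∈ range (k - l + 1),
        wfun p q k s * gfun p q l k s * ufun Cl q l A (k - s) := by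
  have hr : (0:ℝ) < p + q := by linarith
  have hk0 : (0:ℝ) < (k : ℝ) := by
    have : 0 < k := by omega
    exact_mod_cast this
  rw [Finset.sum_div]
  refine Finset.sum_congr rfl fun s hs => ?_
  rw [Finset.mem_range] at hs
  have hm1 : 1 ≤ k - s := by omega
  have hm0 : (0:ℝ) < ((k - s : ℕ) : ℝ) := by exact_mod_cast hm1
  set α : ℝ := (l : ℝ) / 2 with hα
  have hα0 : (0:ℝ) ≤ α := by positivity
  have hneg : -(l : ℝ) / 2 = -α := by rw [hα]; ring
  have key : gfun p q l k s * ((p + q) / q) ^ α * (k : ℝ) ^ (-α)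
      = ((k - s : ℕ) : ℝ) ^ (-α) := by
    rw [Real.rpow_neg hk0.le, Real.rpow_neg hm0.le, ← Real.inv_rpow hk0.le,
      ← Real.inv_rpow hm0.le, gfun, ← Real.mul_rpow (by positivity) (by positivity),
      ← Real.mul_rpow (by positivity) (by positivity)]
    congr 1
    field_simp
  have hd : Cl * ((k - s : ℕ) : ℝ) ^ (-(l : ℝ) / 2) * q ^ (k - s) ≠ 0 := by
    rw [hneg]
    have : (0:ℝ) < ((k - s : ℕ) : ℝ) ^ (-α) := Real.rpow_pos_of_pos hm0 _
    positivity
  have hAm : A (k - s) = ufun Cl q l A (k - s) *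
      (Cl * ((k - s : ℕ) : ℝ) ^ (-(l : ℝ) / 2) * q ^ (k - s)) :=
    (div_mul_cancel₀ _ hd).symm
  rw [hAm, wfun, hneg, ← key]
  have hE : (0:ℝ) < ((p + q) / q) ^ α := Real.rpow_pos_of_pos (by positivity) _
  have hK : (0:ℝ) < (k : ℝ) ^ (-α) := Real.rpow_pos_of_pos hk0 _
  have hrk : (0:ℝ) < (p + q) ^ k := by positivity
  field_simp
private lemma main_tendsto {p q Cl : ℝ} (hp : 0 < p) (hq : 0 < q) (hCl : 0 < Cl)
    (l : ℕ) (hl : 1 ≤ l) (A : ℕ → ℝ)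
    (hu : Tendsto (fun m : ℕ => ufun Cl q l A m) atTop (𝓝 1)) :
    Tendsto (fun k : ℕ => ∑ s ∈ range (k - l + 1),
        wfun p q k s * gfun p q l k s * ufun Cl q l A (k - s)) atTop (𝓝 1) := by
  classical
  have hr : (0:ℝ) < p + q := by linarith
  set β : ℝ := p / (p + q) with hβ
  have hβ0 : 0 < β := by positivity
  set y₀ : ℝ := q / (p + q) with hy₀
  have hy₀0 : 0 < y₀ := by positivity
  have hy₀1 : y₀ ≤ 1 := by rw [hy₀, div_le_one hr]; linarith
  have hβy : 1 - β = y₀ := by rw [hβ, hy₀]; field_simp; ring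
  set α : ℝ := (l : ℝ) / 2 with hα
  have hα0 : (0:ℝ) ≤ α := by positivity
  -- global bound on u
  obtain ⟨M₀, hM₀⟩ := Metric.tendsto_atTop.mp hu 1 one_pos
  set B : ℝ := 2 + ∑ m ∈ range M₀, |ufun Cl q l A m| with hBdef
  have hB0 : 0 ≤ B := by
    have : (0:ℝ) ≤ ∑ m ∈ range M₀, |ufun Cl q l A m| :=
      Finset.sum_nonneg fun m _ => abs_nonneg _
    linarith
  have hB : ∀ m : ℕ, |ufun Cl q l A m| ≤ B := by
    intro m
    rcases le_or_gt M₀ m with h | h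
    · have h1 := hM₀ m h
      rw [Real.dist_eq] at h1
      have h2 : (0:ℝ) ≤ ∑ m ∈ range M₀, |ufun Cl q l A m| :=
        Finset.sum_nonneg fun m _ => abs_nonneg _
      have := abs_sub_abs_le_abs_sub (ufun Cl q l A m) 1
      rw [hBdef]; simp only [abs_one] at this ⊢; linarith
    · have h1 : |ufun Cl q l A m| ≤ ∑ m ∈ range M₀, |ufun Cl q l A m| :=
        Finset.single_le_sum (f := fun i => |ufun Cl q l A i|)
          (fun i _ => abs_nonneg _) (Finset.mem_range.mpr h)
      rw [hBdef]; linarith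
  rw [Metric.tendsto_atTop]
  intro δ hδ
  rw [← Filter.eventually_atTop]
  set δ₁ : ℝ := min (δ / 8) 1 with hδ₁def
  have hδ₁0 : 0 < δ₁ := lt_min (by linarith) one_pos
  have hδ₁1 : δ₁ ≤ 1 := min_le_right _ _
  have hδ₁δ : δ₁ ≤ δ / 8 := min_le_left _ _
  -- window function continuity
  set F : ℝ → ℝ := fun y => (y₀ / y) ^ α with hF
  have hFy₀ : F y₀ = 1 := by
    rw [hF]; simp only [div_self hy₀0.ne']; exact Real.one_rpow α
  have hFc : ContinuousAt F y₀ := by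
    apply ContinuousAt.rpow_const
    · exact continuousAt_const.div continuousAt_id hy₀0.ne'
    · exact Or.inr hα0
  obtain ⟨η₀, hη₀0, hball⟩ := Metric.continuousAt_iff.mp hFc δ₁ hδ₁0
  set η : ℝ := min (η₀ / 2) (y₀ / 2) with hηdef
  have hη0 : 0 < η := lt_min (by linarith) (by linarith)
  have hηy₀ : η ≤ y₀ / 2 := min_le_right _ _
  have hcoef : 0 < y₀ - η := by linarith
  have hη : ∀ y : ℝ, |y - y₀| ≤ η → |F y - 1| ≤ δ₁ := by
    intro y hy
    have h1 : dist y y₀ < η₀ := by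
      rw [Real.dist_eq]
      have : η < η₀ := lt_of_le_of_lt (min_le_left _ _) (by linarith)
      linarith
    have h2 := hball h1
    rw [Real.dist_eq, hFy₀] at h2
    linarith
  -- tail bounds
  obtain ⟨ρ₂, hρ₂0, hρ₂1, hρ₂⟩ := tail_upper hp hq
    (show p / (p + q) < β + η by rw [← hβ]; linarith)
  obtain ⟨ρ₁, hρ₁0, hρ₁1, hρ₁⟩ := tail_lower hp hq
    (show β - η < p / (p + q) by rw [← hβ]; linarith)
  -- convergence to 1 on window
  obtain ⟨M, hM⟩ := Metric.tendsto_atTop.mp hu δ₁ hδ₁0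
  -- eventual conditions
  have Etend : Tendsto (fun k : ℕ => (y₀ - η) * k) atTop atTop :=
    (tendsto_natCast_atTop_atTop (R := ℝ)).const_mul_atTop hcoef
  have E0 : ∀ᶠ k : ℕ in atTop, l ≤ k := eventually_ge_atTop l
  have E1 : ∀ᶠ k : ℕ in atTop, (M : ℝ) ≤ (y₀ - η) * k := Etend.eventually_ge_atTop _
  have E2 : ∀ᶠ k : ℕ in atTop, (l : ℝ) ≤ (y₀ - η) * k := Etend.eventually_ge_atTop _
  have E3 : ∀ᶠ k : ℕ in atTop, (B + 1) * ρ₁ ^ k ≤ δ / 6 := by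
    have T1 : Tendsto (fun k : ℕ => (B + 1) * ρ₁ ^ k) atTop (𝓝 ((B + 1) * 0)) :=
      (tendsto_pow_atTop_nhds_zero_of_lt_one hρ₁0.le hρ₁1).const_mul (B + 1)
    rw [mul_zero] at T1
    exact T1.eventually (eventually_le_nhds (by linarith))
  have E4 : ∀ᶠ k : ℕ in atTop, (B + 1) * ((k : ℝ) ^ l * ρ₂ ^ k) ≤ δ / 6 := by
    have hn : ‖ρ₂‖ < 1 := by rw [Real.norm_eq_abs, abs_of_pos hρ₂0]; exact hρ₂1
    have T2 : Tendsto (fun k : ℕ => (B + 1) * ((k : ℝ) ^ l * ρ₂ ^ k)) atTop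
        (𝓝 ((B + 1) * 0)) :=
      ((summable_pow_mul_geometric_of_norm_lt_one l hn).tendsto_atTop_zero).const_mul _
    rw [mul_zero] at T2
    exact T2.eventually (eventually_le_nhds (by linarith))
  have E5 : ∀ᶠ k : ℕ in atTop, ρ₂ ^ k ≤ δ / 6 := by
    have T3 : Tendsto (fun k : ℕ => ρ₂ ^ k) atTop (𝓝 0) :=
      tendsto_pow_atTop_nhds_zero_of_lt_one hρ₂0.le hρ₂1
    exact T3.eventually (eventually_le_nhds (by linarith))
  filter_upwards [E0, E1, E2, E3, E4, E5] with k hk hkM hkl hkρ₁ hkρ₂ hkρ₂'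
  -- now fixed k
  have hk1 : 1 ≤ k := le_trans hl hk
  have hk0 : (0:ℝ) < (k : ℝ) := by exact_mod_cast hk1
  have hw0 : ∀ s, 0 ≤ wfun p q k s := by
    intro s; unfold wfun; positivity
  have hsum1 : ∑ s ∈ range (k + 1), wfun p q k s = 1 := sum_w_eq_one hp hq k
  have hTsub : range (k - l + 1) ⊆ range (k + 1) := Finset.range_subset_range.mpr (by omega)
  set T : Finset ℕ := range (k - l + 1) with hT
  set w : ℕ → ℝ := wfun p q k with hw
  set g : ℕ → ℝ := gfun p q l k with hg
  set u : ℕ → ℝ := ufun Cl q l A with huu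
  -- cast facts for s ∈ T
  have hmem : ∀ s ∈ T, s ≤ k - l ∧ l ≤ k - s ∧ ((k - s : ℕ) : ℝ) = (k : ℝ) - s ∧
      (0:ℝ) < ((k - s : ℕ) : ℝ) := by
    intro s hs
    rw [hT, Finset.mem_range] at hs
    have h1 : s ≤ k - l := by omega
    have h2 : l ≤ k - s := by omega
    have h3 : ((k - s : ℕ) : ℝ) = (k : ℝ) - s := by
      have : s ≤ k := by omega
      push_cast [Nat.cast_sub this]; ring
    refine ⟨h1, h2, h3, ?_⟩
    rw [h3]
    have : (s : ℝ) < k := by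
      have : s < k := by omega
      exact_mod_cast this
    linarith

  -- decomposition
  set S : ℝ := ∑ s ∈ T, w s * g s * u (k - s) with hS
  have hsd : (1:ℝ) = (∑ s ∈ range (k + 1) \ T, w s) + ∑ s ∈ T, w s := by
    rw [← hsum1, Finset.sum_sdiff hTsub]
  have hdecomp : S - 1 = (∑ s ∈ T, (w s * (g s * u (k - s)) - w s)) -
      ∑ s ∈ range (k + 1) \ T, w s := by
    rw [Finset.sum_sub_distrib]
    have h1 : ∑ s ∈ T, w s * (g s * u (k - s)) = S := by
      rw [hS]; exact Finset.sum_congr rfl fun s _ => by ring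
    rw [h1]; linarith only [hsd]
  have habs : |S - 1| ≤ (∑ s ∈ T, w s * |g s * u (k - s) - 1|) +
      ∑ s ∈ range (k + 1) \ T, w s := by
    rw [hdecomp]
    have h1 : |(∑ s ∈ T, (w s * (g s * u (k - s)) - w s)) -
        ∑ s ∈ range (k + 1) \ T, w s| ≤
        |∑ s ∈ T, (w s * (g s * u (k - s)) - w s)| +
        |∑ s ∈ range (k + 1) \ T, w s| := abs_sub _ _
    have h2 : |∑ s ∈ T, (w s * (g s * u (k - s)) - w s)| ≤
        ∑ s ∈ T, w s * |g s * u (k - s) - 1| := by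
      refine le_trans (Finset.abs_sum_le_sum_abs _ _) (Finset.sum_le_sum fun s _ => ?_)
      have h3 : w s * (g s * u (k - s)) - w s = w s * (g s * u (k - s) - 1) := by ring
      rw [h3, abs_mul, abs_of_nonneg (hw0 s)]
    have h3 : |∑ s ∈ range (k + 1) \ T, w s| = ∑ s ∈ range (k + 1) \ T, w s :=
      abs_of_nonneg (Finset.sum_nonneg fun s _ => hw0 s)
    rw [h3] at h1
    linarith only [h1, h2]
  -- predicates
  set Plow : ℕ → Prop := fun s => (s : ℝ) < (β - η) * k with hPlow
  set Phigh : ℕ → Prop := fun s => (β + η) * k < (s : ℝ) with hPhigh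
  -- tail bound
  have htail : ∑ s ∈ range (k + 1) \ T, w s ≤ ρ₂ ^ k := by
    have hsdf : range (k + 1) \ T = (range (k + 1)).filter (fun s => ¬ s < k - l + 1) := by
      rw [Finset.sdiff_eq_filter]
      exact Finset.filter_congr fun x _ => by rw [hT, Finset.mem_range]
    rw [hsdf]
    apply hρ₂ k _
    intro s hsk hPs
    have h1 : k - l + 1 ≤ s := by omega
    have h2 : ((k - l + 1 : ℕ) : ℝ) ≤ (s : ℝ) := by exact_mod_cast h1
    have h3 : ((k - l + 1 : ℕ) : ℝ) = (k : ℝ) - l + 1 := by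
      push_cast [Nat.cast_sub hk]; ring
    rw [h3] at h2
    have h5 : y₀ * (k:ℝ) = (1 - β) * k := by rw [hβy]
    have h4 : (β + η) * k ≤ (k : ℝ) - l + 1 := by linarith only [hkl, h5]
    linarith only [h2, h4]
  -- low region bound
  have hlowsum : ∑ s ∈ T.filter Plow, w s * |g s * u (k - s) - 1| ≤ (B + 1) * ρ₁ ^ k := by
    have hpt : ∀ s ∈ T.filter Plow, w s * |g s * u (k - s) - 1| ≤ w s * (B + 1) := by
      intro s hs
      rw [Finset.mem_filter] at hs
      obtain ⟨hs1, hs2, hs3, hs4⟩ := hmem s hs.1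
      have hPs : (s : ℝ) < (β - η) * k := hs.2
      have hbase : q * (k : ℝ) / ((p + q) * ((k - s : ℕ) : ℝ)) ≤ 1 := by
        rw [div_le_one (by positivity)]
        have hqy : q = y₀ * (p + q) := by rw [hy₀]; field_simp
        have h7 : (s : ℝ) ≤ β * k := by
          linarith only [hPs, mul_nonneg hη0.le hk0.le]
        have h8 : q * (k:ℝ) - (p + q) * ((k - s : ℕ) : ℝ) = (p + q) * ((s:ℝ) - β * k) := by
          rw [hs3, hβ]; field_simp; ring
        have h9 : (0:ℝ) ≤ (p + q) * (β * k - s) := mul_nonneg hr.le (by linarith only [h7])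
        linarith only [h8, h9]
      have hg1 : g s ≤ 1 := by
        rw [hg]; unfold gfun
        exact Real.rpow_le_one (by positivity) hbase hα0
      have hg0 : 0 ≤ g s := by
        rw [hg]; unfold gfun; positivity
      have hub := hB (k - s)
      have hbig : |g s * u (k - s) - 1| ≤ B + 1 := by
        have h6 : |g s * u (k - s)| ≤ B := by
          rw [abs_mul, abs_of_nonneg hg0]
          calc g s * |u (k - s)| ≤ 1 * B :=
              mul_le_mul hg1 hub (abs_nonneg _) zero_le_one
            _ = B := one_mul B
        calc |g s * u (k - s) - 1| ≤ |g s * u (k - s)| + 1 := by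
              have h7 := abs_sub (g s * u (k - s)) 1
              simpa using h7
          _ ≤ B + 1 := by linarith only [h6]
      exact mul_le_mul_of_nonneg_left hbig (hw0 s)
    calc ∑ s ∈ T.filter Plow, w s * |g s * u (k - s) - 1|
        ≤ ∑ s ∈ T.filter Plow, w s * (B + 1) := Finset.sum_le_sum hpt
      _ = (B + 1) * ∑ s ∈ T.filter Plow, w s := by
          rw [Finset.mul_sum]; exact Finset.sum_congr rfl fun s _ => by ring
      _ ≤ (B + 1) * ρ₁ ^ k := by
          apply mul_le_mul_of_nonneg_left _ (by linarith only [hB0])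
          calc ∑ s ∈ T.filter Plow, w s ≤ ∑ s ∈ (range (k+1)).filter Plow, w s := by
                apply Finset.sum_le_sum_of_subset_of_nonneg
                · exact Finset.filter_subset_filter _ hTsub
                · intro s _ _; exact hw0 s
            _ ≤ ρ₁ ^ k := by
                apply hρ₁ k Plow
                intro s hsk hPs
                exact le_of_lt hPs
  -- high region bound
  have hhighsum : ∑ s ∈ (T.filter (fun s => ¬ Plow s)).filter Phigh,
      w s * |g s * u (k - s) - 1| ≤ (B + 1) * ((k:ℝ) ^ l * ρ₂ ^ k) := by
    have hpt : ∀ s ∈ (T.filter (fun s => ¬ Plow s)).filter Phigh,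
        w s * |g s * u (k - s) - 1| ≤ w s * ((B + 1) * (k:ℝ) ^ l) := by
      intro s hs
      rw [Finset.mem_filter, Finset.mem_filter] at hs
      obtain ⟨hs1, hs2, hs3, hs4⟩ := hmem s hs.1.1
      have hbase : q * (k : ℝ) / ((p + q) * ((k - s : ℕ) : ℝ)) ≤ (k : ℝ) := by
        rw [div_le_iff₀ (by positivity)]
        have hm1 : (1:ℝ) ≤ ((k - s : ℕ) : ℝ) := by
          have h0 : 1 ≤ k - s := by omega
          exact_mod_cast h0
        have h8 : (0:ℝ) ≤ (p + q) * (k:ℝ) * (((k - s : ℕ) : ℝ) - 1) :=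
          mul_nonneg (mul_nonneg hr.le hk0.le) (by linarith only [hm1])
        linarith only [h8, mul_nonneg hp.le hk0.le]
      have hgk : g s ≤ (k:ℝ) ^ l := by
        rw [hg]; unfold gfun
        calc (q * (k:ℝ) / ((p + q) * ((k - s : ℕ) : ℝ))) ^ α ≤ (k:ℝ) ^ α :=
              Real.rpow_le_rpow (by positivity) hbase hα0
          _ ≤ (k:ℝ) ^ ((l:ℝ)) := by
              apply Real.rpow_le_rpow_of_exponent_le (by exact_mod_cast hk1)
              rw [hα]
              have h0 : (0:ℝ) ≤ (l:ℝ) := by positivity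
              linarith only [h0]
          _ = (k:ℝ) ^ l := Real.rpow_natCast _ l
      have hg0 : 0 ≤ g s := by rw [hg]; unfold gfun; positivity
      have hkl1 : (1:ℝ) ≤ (k:ℝ) ^ l := by
        have h1k : (1:ℝ) ≤ (k:ℝ) := by exact_mod_cast hk1
        calc (1:ℝ) = 1 ^ l := (one_pow l).symm
          _ ≤ (k:ℝ) ^ l := pow_le_pow_left₀ zero_le_one h1k l
      have hub := hB (k - s)
      have hbig : |g s * u (k - s) - 1| ≤ (B + 1) * (k:ℝ) ^ l := by
        have h6 : |g s * u (k - s)| ≤ B * (k:ℝ) ^ l := by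
          rw [abs_mul, abs_of_nonneg hg0]
          calc g s * |u (k - s)| ≤ (k:ℝ) ^ l * B :=
              mul_le_mul hgk hub (abs_nonneg _) (by positivity)
            _ = B * (k:ℝ) ^ l := by ring
        calc |g s * u (k - s) - 1| ≤ |g s * u (k - s)| + 1 := by
              have h7 := abs_sub (g s * u (k - s)) 1
              simpa using h7
          _ ≤ B * (k:ℝ) ^ l + 1 := by linarith only [h6]
          _ ≤ (B + 1) * (k:ℝ) ^ l := by linarith only [hkl1]
      exact mul_le_mul_of_nonneg_left hbig (hw0 s)
    calc ∑ s ∈ (T.filter (fun s => ¬ Plow s)).filter Phigh, w s * |g s * u (k - s) - 1|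
        ≤ ∑ s ∈ (T.filter (fun s => ¬ Plow s)).filter Phigh, w s * ((B + 1) * (k:ℝ) ^ l) :=
          Finset.sum_le_sum hpt
      _ = ((B + 1) * (k:ℝ) ^ l) * ∑ s ∈ (T.filter (fun s => ¬ Plow s)).filter Phigh, w s := by
          rw [Finset.mul_sum]; exact Finset.sum_congr rfl fun s _ => by ring
      _ ≤ ((B + 1) * (k:ℝ) ^ l) * ρ₂ ^ k := by
          apply mul_le_mul_of_nonneg_left _ (by positivity)
          calc ∑ s ∈ (T.filter (fun s => ¬ Plow s)).filter Phigh, w s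
              ≤ ∑ s ∈ (range (k+1)).filter Phigh, w s := by
                apply Finset.sum_le_sum_of_subset_of_nonneg
                · intro x hx
                  rw [Finset.mem_filter, Finset.mem_filter] at hx
                  rw [Finset.mem_filter]
                  exact ⟨hTsub hx.1.1, hx.2⟩
                · intro s _ _; exact hw0 s
            _ ≤ ρ₂ ^ k := by
                apply hρ₂ k Phigh
                intro s hsk hPs
                exact le_of_lt hPs
      _ = (B + 1) * ((k:ℝ) ^ l * ρ₂ ^ k) := by ring
  -- mid region bound
  have hmidsum : ∑ s ∈ (T.filter (fun s => ¬ Plow s)).filter (fun s => ¬ Phigh s),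
      w s * |g s * u (k - s) - 1| ≤ 3 * δ₁ := by
    have hpt : ∀ s ∈ (T.filter (fun s => ¬ Plow s)).filter (fun s => ¬ Phigh s),
        w s * |g s * u (k - s) - 1| ≤ w s * (3 * δ₁) := by
      intro s hs
      rw [Finset.mem_filter, Finset.mem_filter] at hs
      obtain ⟨hs1, hs2, hs3, hs4⟩ := hmem s hs.1.1
      have hPl : (β - η) * k ≤ (s : ℝ) := not_lt.mp hs.1.2
      have hPh : (s : ℝ) ≤ (β + η) * k := not_lt.mp hs.2
      have hwin : |((k - s : ℕ) : ℝ) / k - y₀| ≤ η := by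
        have he : ((k - s : ℕ) : ℝ) / k - y₀ = (β * k - s) / k := by
          rw [hs3, ← hβy]; field_simp; ring
        rw [he, abs_div, abs_of_pos hk0, div_le_iff₀ hk0, abs_le]
        constructor
        · linarith only [hPh]
        · linarith only [hPl]
      have hgF : g s = F (((k - s : ℕ) : ℝ) / k) := by
        rw [hg, hF]; unfold gfun
        congr 1
        rw [hy₀]
        field_simp
      have hgb : |g s - 1| ≤ δ₁ := by rw [hgF]; exact hη _ hwin
      have hmM : M ≤ k - s := by
        have h5 : (M : ℝ) ≤ ((k - s : ℕ) : ℝ) := by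
          rw [hs3]
          have h6 : y₀ * (k:ℝ) = (1 - β) * k := by rw [hβy]
          have h7 : (y₀ - η) * k ≤ (k:ℝ) - s := by linarith only [h6, hPh]
          linarith only [hkM, h7]
        exact_mod_cast h5
      have hub : |u (k - s) - 1| ≤ δ₁ := by
        have h5 := hM (k - s) hmM
        rw [Real.dist_eq] at h5
        exact le_of_lt h5
      have hcomb : |g s * u (k - s) - 1| ≤ 3 * δ₁ := by
        have he : g s * u (k - s) - 1 = g s * (u (k - s) - 1) + (g s - 1) := by ring
        have h6 : |g s| ≤ 1 + δ₁ := by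
          have h7 := abs_sub_abs_le_abs_sub (g s) 1
          simp only [abs_one] at h7
          linarith only [h7, hgb]
        have hsq : δ₁ * δ₁ ≤ 1 * δ₁ := mul_le_mul_of_nonneg_right hδ₁1 hδ₁0.le
        calc |g s * u (k - s) - 1| = |g s * (u (k - s) - 1) + (g s - 1)| := by rw [he]
          _ ≤ |g s * (u (k - s) - 1)| + |g s - 1| := abs_add_le _ _
          _ = |g s| * |u (k - s) - 1| + |g s - 1| := by rw [abs_mul]
          _ ≤ (1 + δ₁) * δ₁ + δ₁ := by
              have h8 : |g s| * |u (k - s) - 1| ≤ (1 + δ₁) * δ₁ :=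
                mul_le_mul h6 hub (abs_nonneg _) (by linarith only [hδ₁0])
              linarith only [h8, hgb]
          _ ≤ 3 * δ₁ := by linarith only [hsq]
      exact mul_le_mul_of_nonneg_left hcomb (hw0 s)
    calc ∑ s ∈ (T.filter (fun s => ¬ Plow s)).filter (fun s => ¬ Phigh s),
          w s * |g s * u (k - s) - 1|
        ≤ ∑ s ∈ (T.filter (fun s => ¬ Plow s)).filter (fun s => ¬ Phigh s),
          w s * (3 * δ₁) := Finset.sum_le_sum hpt
      _ = (3 * δ₁) * ∑ s ∈ (T.filter (fun s => ¬ Plow s)).filter (fun s => ¬ Phigh s),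
          w s := by rw [Finset.mul_sum]; exact Finset.sum_congr rfl fun s _ => by ring
      _ ≤ (3 * δ₁) * 1 := by
          apply mul_le_mul_of_nonneg_left _ (by positivity)
          rw [← hsum1]
          apply Finset.sum_le_sum_of_subset_of_nonneg
          · intro x hx
            rw [Finset.mem_filter, Finset.mem_filter] at hx
            exact hTsub hx.1.1
          · intro s _ _; exact hw0 s
      _ = 3 * δ₁ := mul_one _
  -- assemble
  have hsplit1 : ∑ s ∈ T, w s * |g s * u (k - s) - 1| =
      (∑ s ∈ T.filter Plow, w s * |g s * u (k - s) - 1|) +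
      ((∑ s ∈ (T.filter (fun s => ¬ Plow s)).filter Phigh, w s * |g s * u (k - s) - 1|) +
       (∑ s ∈ (T.filter (fun s => ¬ Plow s)).filter (fun s => ¬ Phigh s),
          w s * |g s * u (k - s) - 1|)) := by
    rw [Finset.sum_filter_add_sum_filter_not (T.filter (fun s => ¬ Plow s)) Phigh,
      Finset.sum_filter_add_sum_filter_not T Plow]
  rw [Real.dist_eq]
  have hfinal : |S - 1| ≤ 3 * δ₁ + (B + 1) * ρ₁ ^ k + (B + 1) * ((k:ℝ) ^ l * ρ₂ ^ k)
      + ρ₂ ^ k := by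
    rw [hsplit1] at habs
    linarith only [habs, hlowsum, hhighsum, hmidsum, htail]
  have h38 : 3 * δ₁ ≤ 3 * (δ / 8) := by linarith only [hδ₁δ]
  calc |S - 1| ≤ 3 * δ₁ + (B + 1) * ρ₁ ^ k + (B + 1) * ((k:ℝ) ^ l * ρ₂ ^ k) + ρ₂ ^ k :=
        hfinal
    _ ≤ 3 * (δ / 8) + δ / 6 + δ / 6 + δ / 6 := by
        linarith only [h38, hkρ₁, hkρ₂, hkρ₂']
    _ < δ := by linarith only [hδ]


/-- Binomial convolution asymptotics: if `A_k ~ C_l k^{-l/2} (l/(l+1))^k`, then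
`C_{k,l} = ∑_{s=0}^{k-l} C(k,s) ((λ-l)/λ)^s A_{k-s}` satisfies
`C_{k,l} ~ C_l (1 + (λ-l)(l+1)/(λ l))^{l/2} k^{-l/2} ((λ-l)/λ + l/(l+1))^k`. -/
theorem binomial_convolution_asymptotics (lam : ℝ) (hlam : 0 < lam)
    (l : ℕ) (hl : 1 ≤ l) (hll : (l : ℝ) < lam)
    (Cl : ℝ) (hCl : 0 < Cl) (A : ℕ → ℝ)
    (hA : Tendsto (fun k : ℕ =>
        A k / (Cl * (k : ℝ) ^ (-(l : ℝ) / 2) * ((l : ℝ) / ((l : ℝ) + 1)) ^ k))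
      atTop (nhds 1)) :
    Tendsto (fun k : ℕ =>
        (∑ s ∈ Finset.range (k - l + 1),
            (Nat.choose k s : ℝ) * ((lam - l) / lam) ^ s * A (k - s)) /
          (Cl * (1 + (lam - l) * ((l : ℝ) + 1) / (lam * l)) ^ ((l : ℝ) / 2) *
            (k : ℝ) ^ (-(l : ℝ) / 2) *
            ((lam - l) / lam + (l : ℝ) / ((l : ℝ) + 1)) ^ k))
      atTop (nhds 1) := by
  have hl0 : (0:ℝ) < (l : ℝ) := by exact_mod_cast hl
  set p : ℝ := (lam - l) / lam with hpdef
  set q : ℝ := (l : ℝ) / ((l : ℝ) + 1) with hqdef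
  have hp : 0 < p := div_pos (by linarith) hlam
  have hq : 0 < q := by rw [hqdef]; positivity
  have hX : 1 + (lam - l) * ((l : ℝ) + 1) / (lam * l) = (p + q) / q := by
    rw [hpdef, hqdef]
    field_simp
    ring
  rw [hX]
  have hu : Tendsto (fun m : ℕ => ufun Cl q l A m) atTop (𝓝 1) := by
    unfold ufun
    exact hA
  refine Tendsto.congr' ?_ (main_tendsto hp hq hCl l hl A hu)
  filter_upwards [eventually_ge_atTop l] with k hk
  exact (ratio_eq hp hq hCl l k hl hk A).symm
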